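/- Let R be a K-graded ring and q a prime ideal of R_0. Then the fiber of Spec_K(R) → Spec(R_0) over q contains a unique K-prime ideal p that contains every K-prime ideal in the fiber; moreover q is a maximal ideal of R_0 if and only if this p is a K-maximal ideal of R. -/

import Mathlib

section

variable {K R : Type*} [AddCommGroup K] [DecidableEq K] [CommRing R]
  (𝒜 : K → AddSubgroup R) [GradedRing 𝒜]

/-- A `K`-prime ideal: a proper (homogeneous) ideal such that a product of homogeneous
elements lies in it only if one of the factors does. -/
def IsKPrime (p : Ideal R) : Prop :=
  Ideal.IsHomogeneous 𝒜 p ∧ p ≠ ⊤ ∧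
    ∀ a b : R, SetLike.IsHomogeneousElem 𝒜 a → SetLike.IsHomogeneousElem 𝒜 b →
      a * b ∈ p → a ∈ p ∨ b ∈ p

/-- A `K`-maximal ideal: a homogeneous ideal maximal among proper homogeneous ideals. -/
def IsKMaximal (p : Ideal R) : Prop :=
  Ideal.IsHomogeneous 𝒜 p ∧ p ≠ ⊤ ∧
    ∀ a : Ideal R, Ideal.IsHomogeneous 𝒜 a → p ≤ a → a ≠ ⊤ → a = p

/-- Contraction of an ideal of `R` to the degree zero subring `R₀`. -/
def contractToZero (a : Ideal R) : Ideal ↥(SetLike.GradeZero.subring 𝒜) :=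
  Ideal.comap (SetLike.GradeZero.subring 𝒜).subtype a

end

namespace Stmt17Aux

open DirectSum

variable {K R : Type*} [AddCommGroup K] [DecidableEq K] [CommRing R]
  (𝒜 : K → AddSubgroup R) [GradedRing 𝒜]

variable (q : Ideal ↥(SetLike.GradeZero.subring 𝒜))

/-- The set of degree-zero elements of `R` lying in `q`, as an additive subgroup of `R`. -/
def qA : AddSubgroup R :=
  q.toAddSubgroup.map (SetLike.GradeZero.subring 𝒜).subtype.toAddMonoidHom

lemma mem_qA {a : R} : a ∈ qA 𝒜 q ↔ ∃ y ∈ q, (y : R) = a := Iff.rfl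

lemma mem_qA_iff {a : R} (h : a ∈ 𝒜 0) :
    a ∈ qA 𝒜 q ↔ (⟨a, h⟩ : SetLike.GradeZero.subring 𝒜) ∈ q := by
  constructor
  · rintro ⟨y, hy, rfl⟩
    exact hy
  · intro h'
    exact ⟨⟨a, h⟩, h', rfl⟩

lemma qA_mul_mem {a c : R} (ha : a ∈ qA 𝒜 q) (hc : c ∈ 𝒜 0) : c * a ∈ qA 𝒜 q := by
  obtain ⟨y, hy, rfl⟩ := ha
  exact ⟨⟨c, hc⟩ * y, q.mul_mem_left _ hy, rfl⟩

lemma qA_mul_mem' {a c : R} (ha : a ∈ qA 𝒜 q) (hc : c ∈ 𝒜 0) : a * c ∈ qA 𝒜 q := by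
  rw [mul_comm]; exact qA_mul_mem 𝒜 q ha hc



/-- key multiplicative stability -/
lemma key (r x : R)
    (hx : ∀ (k : K), ∀ b ∈ 𝒜 (-k), (decompose 𝒜 x k : R) * b ∈ qA 𝒜 q)
    (k : K) (b : R) (hb : b ∈ 𝒜 (-k)) :
    (decompose 𝒜 (r * x) k : R) * b ∈ qA 𝒜 q := by
  classical
  rw [decompose_mul, coe_mul_apply, Finset.sum_mul]
  refine AddSubgroup.sum_mem _ ?_
  rintro ⟨i, j⟩ hij
  simp only [Finset.mem_filter, Finset.mem_product] at hij
  obtain ⟨-, hijk⟩ := hij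
  have h1 : (decompose 𝒜 r i : R) * b ∈ 𝒜 (-j) := by
    have : i + -k = -j := by
      rw [← hijk]; abel
    exact this ▸ SetLike.GradedMul.mul_mem (SetLike.coe_mem _) hb
  have h2 := hx j _ h1
  have h3 : (decompose 𝒜 r i : R) * (decompose 𝒜 x j : R) * b
      = (decompose 𝒜 x j : R) * ((decompose 𝒜 r i : R) * b) := by ring
  rw [h3]; exact h2


/-- The maximal `K`-prime in the fiber over `q`. -/
def P : Ideal R where
  carrier := {x | ∀ (k : K), ∀ b ∈ 𝒜 (-k), (decompose 𝒜 x k : R) * b ∈ qA 𝒜 q}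
  zero_mem' := by
    intro k b hb
    simp only [decompose_zero, DirectSum.zero_apply, ZeroMemClass.coe_zero, zero_mul]
    exact zero_mem _
  add_mem' := by
    intro x y hx hy k b hb
    rw [decompose_add, DirectSum.add_apply, AddMemClass.coe_add, add_mul]
    exact add_mem (hx k b hb) (hy k b hb)
  smul_mem' := by
    intro r x hx k b hb
    exact key 𝒜 q r x hx k b hb

lemma mem_P {x : R} :
    x ∈ P 𝒜 q ↔ ∀ (k : K), ∀ b ∈ 𝒜 (-k), (decompose 𝒜 x k : R) * b ∈ qA 𝒜 q := Iff.rfl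

lemma P_homogeneous : Ideal.IsHomogeneous 𝒜 (P 𝒜 q) := by
  intro i x hx
  intro k b hb
  rcases eq_or_ne k i with rfl | hne
  · rw [decompose_of_mem_same 𝒜 (SetLike.coe_mem _)]
    exact hx k b hb
  · rw [decompose_of_mem_ne 𝒜 (SetLike.coe_mem (decompose 𝒜 x i)) (Ne.symm hne), zero_mul]
    exact zero_mem _

lemma mem_P_of_mem {x : R} {i : K} (hxi : x ∈ 𝒜 i)
    (h : ∀ b ∈ 𝒜 (-i), x * b ∈ qA 𝒜 q) : x ∈ P 𝒜 q := by
  intro k b hb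
  rcases eq_or_ne k i with rfl | hne
  · rw [decompose_of_mem_same 𝒜 hxi]
    exact h b hb
  · rw [decompose_of_mem_ne 𝒜 hxi (Ne.symm hne), zero_mul]
    exact zero_mem _

lemma not_mem_P_of_mem {x : R} {i : K} (hxi : x ∈ 𝒜 i) (hx : x ∉ P 𝒜 q) :
    ∃ b ∈ 𝒜 (-i), x * b ∉ qA 𝒜 q := by
  by_contra h
  push_neg at h
  exact hx (mem_P_of_mem 𝒜 q hxi (fun b hb => h b hb))


lemma one_mem_grade_zero : (1 : R) ∈ 𝒜 0 := SetLike.one_mem_graded 𝒜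

lemma P_ne_top (hq : q.IsPrime) : P 𝒜 q ≠ ⊤ := by
  intro h
  have h1 : (1 : R) ∈ P 𝒜 q := h ▸ Submodule.mem_top
  have := h1 0 1 (by rw [neg_zero]; exact one_mem_grade_zero 𝒜)
  rw [decompose_of_mem_same 𝒜 (one_mem_grade_zero 𝒜), one_mul] at this
  obtain ⟨y, hy, hy1⟩ := this
  have : y = 1 := Subtype.ext hy1
  exact hq.ne_top (Ideal.eq_top_iff_one _ |>.2 (this ▸ hy))

lemma mul_mem_grade_zero {a b : R} (ha : a ∈ 𝒜 0) (hb : b ∈ 𝒜 0) : a * b ∈ 𝒜 0 := by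
  have := SetLike.GradedMul.mul_mem ha hb
  rwa [zero_add] at this

lemma qA_prime (hq : q.IsPrime) {a b : R} (ha : a ∈ 𝒜 0) (hb : b ∈ 𝒜 0)
    (hab : a * b ∈ qA 𝒜 q) : a ∈ qA 𝒜 q ∨ b ∈ qA 𝒜 q := by
  rw [mem_qA_iff 𝒜 q ha, mem_qA_iff 𝒜 q hb]
  refine hq.mem_or_mem (I := q) ?_
  have h0 : a * b ∈ 𝒜 0 := mul_mem_grade_zero 𝒜 ha hb
  have heq : (⟨a, ha⟩ : SetLike.GradeZero.subring 𝒜) * ⟨b, hb⟩ = ⟨a * b, h0⟩ :=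
    Subtype.ext rfl
  rw [heq]
  exact (mem_qA_iff 𝒜 q h0).mp hab

lemma P_prime_mul (hq : q.IsPrime) (a b : R) (ha : SetLike.IsHomogeneousElem 𝒜 a)
    (hb : SetLike.IsHomogeneousElem 𝒜 b) (hab : a * b ∈ P 𝒜 q) :
    a ∈ P 𝒜 q ∨ b ∈ P 𝒜 q := by
  obtain ⟨i, hai⟩ := ha
  obtain ⟨j, hbj⟩ := hb
  by_contra hcon
  push_neg at hcon
  obtain ⟨hna, hnb⟩ := hcon
  obtain ⟨c, hc, hac⟩ := not_mem_P_of_mem 𝒜 q hai hna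
  obtain ⟨d, hd, hbd⟩ := not_mem_P_of_mem 𝒜 q hbj hnb
  have habm : a * b ∈ 𝒜 (i + j) := SetLike.GradedMul.mul_mem hai hbj
  have hcdm : c * d ∈ 𝒜 (-(i + j)) := by
    rw [neg_add]
    exact SetLike.GradedMul.mul_mem hc hd
  have h1 := hab (i + j) (c * d) hcdm
  rw [decompose_of_mem_same 𝒜 habm] at h1
  have heq : a * b * (c * d) = a * c * (b * d) := by ring
  rw [heq] at h1
  have hac0 : a * c ∈ 𝒜 0 := by
    have := SetLike.GradedMul.mul_mem hai hc
    rwa [add_neg_cancel] at this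
  have hbd0 : b * d ∈ 𝒜 0 := by
    have := SetLike.GradedMul.mul_mem hbj hd
    rwa [add_neg_cancel] at this
  rcases qA_prime 𝒜 q hq hac0 hbd0 h1 with h | h
  · exact hac h
  · exact hbd h

lemma coe_mem_grade_zero (y : ↥(SetLike.GradeZero.subring 𝒜)) : (y : R) ∈ 𝒜 0 := y.2

lemma contract_P : Ideal.comap (SetLike.GradeZero.subring 𝒜).subtype (P 𝒜 q) = q := by
  ext y
  rw [Ideal.mem_comap]
  constructor
  · intro h
    have h2 := h 0 1 (by rw [neg_zero]; exact one_mem_grade_zero 𝒜)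
    rw [show (SetLike.GradeZero.subring 𝒜).subtype y = (y : R) from rfl,
      decompose_of_mem_same 𝒜 (coe_mem_grade_zero 𝒜 y), mul_one] at h2
    obtain ⟨z, hz, hz1⟩ := h2
    have : z = y := Subtype.ext hz1
    exact this ▸ hz
  · intro hy
    refine mem_P_of_mem 𝒜 q (coe_mem_grade_zero 𝒜 y) (fun b hb => ?_)
    rw [neg_zero] at hb
    exact qA_mul_mem' 𝒜 q ⟨y, hy, rfl⟩ hb

lemma coe_mem_P_of_mem_q {m : ↥(SetLike.GradeZero.subring 𝒜)} (hm : m ∈ q) :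
    (m : R) ∈ P 𝒜 q := by
  have := contract_P 𝒜 q
  rw [← this, Ideal.mem_comap] at hm
  exact hm

lemma le_P (p' : Ideal R) (h1 : Ideal.IsHomogeneous 𝒜 p')
    (h2 : Ideal.comap (SetLike.GradeZero.subring 𝒜).subtype p' = q) : p' ≤ P 𝒜 q := by
  intro x hx k b hb
  have hmem : (decompose 𝒜 x k : R) * b ∈ p' := Ideal.mul_mem_right _ _ (h1 k hx)
  have h0 : (decompose 𝒜 x k : R) * b ∈ 𝒜 0 := by
    have := SetLike.GradedMul.mul_mem (SetLike.coe_mem (decompose 𝒜 x k)) hb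
    rwa [add_neg_cancel] at this
  have : (⟨_, h0⟩ : ↥(SetLike.GradeZero.subring 𝒜)) ∈ q := by
    rw [← h2, Ideal.mem_comap]
    exact hmem
  exact ⟨⟨_, h0⟩, this, rfl⟩

lemma decompose_mul_right_zero (r : R) {b : R} (hb : b ∈ 𝒜 0) :
    (decompose 𝒜 (r * b) 0 : R) = (decompose 𝒜 r 0 : R) * b := by
  lift b to 𝒜 0 using hb
  rw [decompose_mul, decompose_coe]
  have := DirectSum.coe_mul_of_apply_add (A := 𝒜) (decompose 𝒜 r) b 0
  rwa [zero_add] at this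

lemma P_isKMaximal_aux (hq : q.IsMaximal) (a : Ideal R) (hahom : Ideal.IsHomogeneous 𝒜 a)
    (hPa : P 𝒜 q ≤ a) (hane : a ≠ ⊤) : a = P 𝒜 q := by
  refine le_antisymm (fun x hx => ?_) hPa
  intro k b hb
  by_contra hn
  have hy : (decompose 𝒜 x k : R) ∈ a := hahom k hx
  have h0 : (decompose 𝒜 x k : R) * b ∈ 𝒜 0 := by
    have := SetLike.GradedMul.mul_mem (SetLike.coe_mem (decompose 𝒜 x k)) hb
    rwa [add_neg_cancel] at this
  have hnq : (⟨_, h0⟩ : ↥(SetLike.GradeZero.subring 𝒜)) ∉ q := by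
    intro hc
    exact hn ⟨_, hc, rfl⟩
  obtain ⟨c, m, hm, hcm⟩ := hq.exists_inv hnq
  have hR : (c : R) * ((decompose 𝒜 x k : R) * b) + (m : R) = 1 := by
    have := congrArg (Subtype.val) hcm
    simpa using this
  have h1a : (1 : R) ∈ a := by
    rw [← hR]
    refine Ideal.add_mem _ ?_ (hPa (coe_mem_P_of_mem_q 𝒜 q hm))
    exact Ideal.mul_mem_left _ _ (Ideal.mul_mem_right _ _ hy)
  exact hane ((Ideal.eq_top_iff_one a).mpr h1a)

lemma q_isMaximal_aux (hq : q.IsPrime)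
    (hmax : ∀ a : Ideal R, Ideal.IsHomogeneous 𝒜 a → P 𝒜 q ≤ a → a ≠ ⊤ → a = P 𝒜 q) :
    q.IsMaximal := by
  rw [Ideal.isMaximal_iff]
  refine ⟨(Ideal.ne_top_iff_one q).mp hq.ne_top, fun J x hqJ hxq hxJ => ?_⟩
  set a := P 𝒜 q ⊔ Ideal.span {(x : R)} with ha
  have hahom : Ideal.IsHomogeneous 𝒜 a :=
    (P_homogeneous 𝒜 q).sup (Ideal.homogeneous_span 𝒜 _ (by
      rintro y hy
      rw [Set.mem_singleton_iff] at hy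
      exact ⟨0, hy ▸ coe_mem_grade_zero 𝒜 x⟩))
  have hxP : (x : R) ∉ P 𝒜 q := by
    intro hc
    refine hxq ?_
    rw [← contract_P 𝒜 q, Ideal.mem_comap]
    exact hc
  have hxa : (x : R) ∈ a := (le_sup_right : Ideal.span {(x:R)} ≤ a) (Ideal.mem_span_singleton_self _)
  have hatop : a = ⊤ := by
    by_contra hne
    have := hmax a hahom le_sup_left hne
    exact hxP (this ▸ hxa)
  have h1 : (1 : R) ∈ a := hatop ▸ Submodule.mem_top
  rw [ha] at h1
  obtain ⟨y, hy, z, hz, hyz⟩ := Submodule.mem_sup.mp h1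
  obtain ⟨r, hr⟩ := Ideal.mem_span_singleton'.mp hz
  have hdec : (decompose 𝒜 (y + z) 0 : R) = 1 := by
    rw [hyz, decompose_of_mem_same 𝒜 (one_mem_grade_zero 𝒜)]
  rw [decompose_add, DirectSum.add_apply, AddMemClass.coe_add, ← hr,
    decompose_mul_right_zero 𝒜 (r := r) (coe_mem_grade_zero 𝒜 x)] at hdec
  have hyq : (⟨_, SetLike.coe_mem (decompose 𝒜 y 0)⟩ : ↥(SetLike.GradeZero.subring 𝒜)) ∈ q := by
    rw [← contract_P 𝒜 q, Ideal.mem_comap]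
    exact (P_homogeneous 𝒜 q) 0 hy
  have h1J : (1 : ↥(SetLike.GradeZero.subring 𝒜)) ∈ J := by
    have heq : (1 : ↥(SetLike.GradeZero.subring 𝒜)) =
        ⟨_, SetLike.coe_mem (decompose 𝒜 y 0)⟩ +
          ⟨_, SetLike.coe_mem (decompose 𝒜 r 0)⟩ * x := by
      apply Subtype.ext
      push_cast
      rw [← hdec]
    rw [heq]
    exact J.add_mem (hqJ hyq) (J.mul_mem_left _ hxJ)
  exact h1J

end Stmt17Aux

section

variable {K R : Type*} [AddCommGroup K] [DecidableEq K] [CommRing R]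
  (𝒜 : K → AddSubgroup R) [GradedRing 𝒜]

/-- For a prime `q` of `R₀`, the fiber of `Spec_K(R) → Spec(R₀)` over `q` contains
a unique `K`-prime ideal `p` containing every `K`-prime in the fiber; moreover `q` is maximal
iff `p` is `K`-maximal. -/
theorem stmt_17 (q : Ideal ↥(SetLike.GradeZero.subring 𝒜)) (hq : q.IsPrime) :
    ∃ p : Ideal R,
      (IsKPrime 𝒜 p ∧ contractToZero 𝒜 p = q ∧
        ∀ p' : Ideal R, IsKPrime 𝒜 p' → contractToZero 𝒜 p' = q → p' ≤ p) ∧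
      (∀ p₂ : Ideal R,
        (IsKPrime 𝒜 p₂ ∧ contractToZero 𝒜 p₂ = q ∧
          ∀ p' : Ideal R, IsKPrime 𝒜 p' → contractToZero 𝒜 p' = q → p' ≤ p₂) → p₂ = p) ∧
      (q.IsMaximal ↔ IsKMaximal 𝒜 p) := by
  refine ⟨Stmt17Aux.P 𝒜 q, ?_, ?_, ?_⟩
  · refine ⟨⟨Stmt17Aux.P_homogeneous 𝒜 q, Stmt17Aux.P_ne_top 𝒜 q hq,
      Stmt17Aux.P_prime_mul 𝒜 q hq⟩, Stmt17Aux.contract_P 𝒜 q, ?_⟩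
    intro p' hp' hc
    exact Stmt17Aux.le_P 𝒜 q p' hp'.1 hc
  · rintro p₂ ⟨hp₂, hc₂, hub₂⟩
    refine le_antisymm ?_ ?_
    · exact Stmt17Aux.le_P 𝒜 q p₂ hp₂.1 hc₂
    · exact hub₂ _ ⟨Stmt17Aux.P_homogeneous 𝒜 q, Stmt17Aux.P_ne_top 𝒜 q hq,
        Stmt17Aux.P_prime_mul 𝒜 q hq⟩ (Stmt17Aux.contract_P 𝒜 q)
  · constructor
    · intro hqmax
      exact ⟨Stmt17Aux.P_homogeneous 𝒜 q, Stmt17Aux.P_ne_top 𝒜 q hq,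
        fun a ha hPa hane => Stmt17Aux.P_isKMaximal_aux 𝒜 q hqmax a ha hPa hane⟩
    · intro hK
      exact Stmt17Aux.q_isMaximal_aux 𝒜 q hq hK.2.2

end
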